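/- Koga's formula for the smooth Rényi entropy: Let P be a pmf on a countable set 𝒳, let 0 < α < 1 and 0 ≤ ε < 1. Let 𝒜 ⊊ 𝒳 be a set of highest-probability elements satisfying: (i) if x₁ ∈ 𝒜 and x₂ ∉ 𝒜 then P(x₁) ≥ P(x₂), and (ii) P(𝒜) < 1 − ε ≤ P(𝒜) + max_{x ∉ 𝒜} P(x). Then the ε-smooth Rényi entropy H_α^ε(P) := (1/(1−α)) log( inf_{Q ∈ B^ε(P)} ∑_x Q(x)^α ), where B^ε(P) = {Q : 0 ≤ Q(x) ≤ P(x) for all x, ∑_x Q(x) ≥ 1 − ε}, equals (1/(1−α)) log( ∑_{x ∈ 𝒜} P(x)^α + (1 − ε − P(𝒜))^α ). -/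

import Mathlib

/-- The set of achievable values `∑_x Q(x)^α` for sub-distributions `Q` dominated by `P`
with total mass at least `1 − ε` (the feasible set of the smooth Rényi entropy). -/
def smoothRenyiVals {X : Type*} (α ε : ℝ) (P : X → ℝ) : Set ℝ :=
  {s | ∃ Q : X → ℝ, (∀ x, 0 ≤ Q x ∧ Q x ≤ P x) ∧ 1 - ε ≤ ∑' x, Q x ∧
    Summable (fun x => Q x ^ α) ∧ s = ∑' x, Q x ^ α}


section KogaAux
open MeasureTheory Set Filter

private lemma min_le_min_add {P Q u : ℝ} (h : Q ≤ P) : min P u ≤ min Q u + (P - Q) := by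
  simp only [min_def]; split_ifs <;> linarith

lemma layer_bound {X : Type*} (P Q : X → ℝ) (F : Finset X) (p c u : ℝ)
    (hQ0 : ∀ x, 0 ≤ Q x) (hQP : ∀ x, Q x ≤ P x)
    (hSQ : Summable Q)
    (hPp : ∀ x ∈ F, p ≤ P x) (hout : ∀ x, x ∉ F → Q x ≤ p)
    (hc0 : 0 ≤ c) (hcp : c ≤ p)
    (hmass : ∑ x ∈ F, P x + c ≤ ∑' x, Q x) (hu : 0 < u) :
    ∑ x ∈ F, min (P x) u + min c u ≤ ∑' x, min (Q x) u := by
  classical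
  have hminS : Summable (fun x => min (Q x) u) :=
    Summable.of_nonneg_of_le (fun x => le_min (hQ0 x) hu.le) (fun x => min_le_left _ _) hSQ
  rcases le_or_gt p u with hpu | hpu
  · -- Case I : u ≥ p
    have hsplit : ∑ x ∈ F, min (Q x) u + ∑' (x : ↥((↑F : Set X)ᶜ)), min (Q ↑x) u
        = ∑' x, min (Q x) u := Summable.sum_add_tsum_compl hminS
    have hsplitQ : ∑ x ∈ F, Q x + ∑' (x : ↥((↑F : Set X)ᶜ)), Q ↑x = ∑' x, Q x :=
      Summable.sum_add_tsum_compl hSQ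
    have h1 : ∑' (x : ↥((↑F : Set X)ᶜ)), min (Q ↑x) u = ∑' (x : ↥((↑F : Set X)ᶜ)), Q ↑x := by
      refine tsum_congr fun x => min_eq_left ?_
      exact le_trans (hout _ (fun hm => x.2 (Finset.mem_coe.2 hm))) hpu
    have h2 : ∑ x ∈ F, min (P x) u ≤ ∑ x ∈ F, min (Q x) u + (∑ x ∈ F, P x - ∑ x ∈ F, Q x) := by
      rw [← Finset.sum_sub_distrib, ← Finset.sum_add_distrib]
      exact Finset.sum_le_sum fun x _ => min_le_min_add (hQP x)
    have h3 : min c u ≤ c := min_le_left _ _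
    linarith
  · -- Case II : u < p
    have hfinS : {x | u ≤ Q x}.Finite := by
      have h2 : ∀ᶠ x in Filter.cofinite, Q x < u :=
        (hSQ.tendsto_cofinite_zero).eventually_lt_const hu
      exact (Filter.eventually_cofinite.1 h2).subset fun x hx => not_lt.2 hx
    set T : Finset X := hfinS.toFinset with hT
    have hmemT : ∀ x, x ∈ T ↔ u ≤ Q x := fun x => by simp [hT]
    have hsumF : ∑ x ∈ F, min (P x) u = F.card * u := by
      rw [Finset.sum_congr rfl (fun x hx => min_eq_right (le_trans hpu.le (hPp x hx))),
        Finset.sum_const, nsmul_eq_mul]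
    have hsplit : ∑ x ∈ T, min (Q x) u + ∑' (x : ↥((↑T : Set X)ᶜ)), min (Q ↑x) u
        = ∑' x, min (Q x) u := Summable.sum_add_tsum_compl hminS
    have hTval : ∑ x ∈ T, min (Q x) u = T.card * u := by
      rw [Finset.sum_congr rfl (fun x hx => min_eq_right ((hmemT x).1 hx)),
        Finset.sum_const, nsmul_eq_mul]
    have hcomplval : ∑' (x : ↥((↑T : Set X)ᶜ)), min (Q ↑x) u
        = ∑' x, Q x - ∑ x ∈ T, Q x := by
      have h1 : ∑' (x : ↥((↑T : Set X)ᶜ)), min (Q ↑x) u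
          = ∑' (x : ↥((↑T : Set X)ᶜ)), Q ↑x := by
        refine tsum_congr fun x => min_eq_left ?_
        have hxT : (↑x : X) ∉ T := fun hm => x.2 (Finset.mem_coe.2 hm)
        have := fun h => hxT ((hmemT (↑x : X)).2 h)
        linarith [not_le.1 (this : ¬ u ≤ Q ↑x)]
      have h2 := Summable.sum_add_tsum_compl (s := T) hSQ
      linarith
    rcases le_or_gt T.card F.card with hmn | hmn
    · -- at most F.card large entries
      have hcardTF : (T \ F).card ≤ (F \ T).card := by
        have h1 := Finset.card_sdiff_add_card_inter T F
        have h2 := Finset.card_sdiff_add_card_inter F T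
        rw [Finset.inter_comm] at h2
        omega
      obtain ⟨W, hWsub, hWcard⟩ := Finset.exists_subset_card_eq hcardTF
      have hWF : W ⊆ F := hWsub.trans Finset.sdiff_subset
      have hdisj : Disjoint (T ∩ F) W := by
        refine Finset.disjoint_left.2 fun x hx hxW => ?_
        have := hWsub hxW
        simp only [Finset.mem_sdiff, Finset.mem_inter] at *
        exact this.2 hx.1
      set A' : Finset X := (T ∩ F) ∪ W with hA'
      have hA'F : A' ⊆ F := Finset.union_subset Finset.inter_subset_right hWF
      have hA'card : A'.card = T.card := by
        rw [hA', Finset.card_union_of_disjoint hdisj, hWcard]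
        have := Finset.card_sdiff_add_card_inter T F
        omega
      have hTQ : ∑ x ∈ T, Q x ≤ ∑ x ∈ A', P x := by
        have hsplitT : ∑ x ∈ T ∩ F, Q x + ∑ x ∈ T \ F, Q x = ∑ x ∈ T, Q x :=
          Finset.sum_inter_add_sum_sdiff T F Q
        have h1 : ∑ x ∈ T ∩ F, Q x ≤ ∑ x ∈ T ∩ F, P x :=
          Finset.sum_le_sum fun x _ => hQP x
        have h2 : ∑ x ∈ T \ F, Q x ≤ ((T \ F).card : ℝ) * p := by
          calc ∑ x ∈ T \ F, Q x ≤ ∑ _x ∈ T \ F, p :=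
                Finset.sum_le_sum fun x hx => hout x (Finset.mem_sdiff.1 hx).2
            _ = ((T \ F).card : ℝ) * p := by rw [Finset.sum_const, nsmul_eq_mul]
        have h3 : (W.card : ℝ) * p ≤ ∑ x ∈ W, P x := by
          calc (W.card : ℝ) * p = ∑ _x ∈ W, p := by rw [Finset.sum_const, nsmul_eq_mul]
            _ ≤ ∑ x ∈ W, P x := Finset.sum_le_sum fun x hx => hPp x (hWF hx)
        have h4 : ∑ x ∈ A', P x = ∑ x ∈ T ∩ F, P x + ∑ x ∈ W, P x := by
          rw [hA', Finset.sum_union hdisj]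
        have hWc : (W.card : ℝ) = ((T \ F).card : ℝ) := Nat.cast_inj.2 hWcard
        rw [← hWc] at h2
        linarith
      have h8 : (A'.card : ℝ) ≤ (F.card : ℝ) := Nat.cast_le.2 (Finset.card_le_card hA'F)
      have hFA' : (F.card : ℝ) * u - (A'.card : ℝ) * u ≤ ∑ x ∈ F, P x - ∑ x ∈ A', P x := by
        have h5 : ∑ x ∈ F, P x - ∑ x ∈ A', P x = ∑ x ∈ F \ A', P x := by
          rw [Finset.sum_sdiff_eq_sub hA'F]
        have h6 : ((F \ A').card : ℝ) * p ≤ ∑ x ∈ F \ A', P x := by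
          calc ((F \ A').card : ℝ) * p = ∑ _x ∈ F \ A', p := by
                rw [Finset.sum_const, nsmul_eq_mul]
            _ ≤ _ := Finset.sum_le_sum fun x hx => hPp x (Finset.mem_sdiff.1 hx).1
        have h7 : ((F \ A').card : ℝ) = (F.card : ℝ) - (A'.card : ℝ) := by
          rw [Finset.card_sdiff_of_subset hA'F, Nat.cast_sub (Finset.card_le_card hA'F)]
        nlinarith [mul_le_mul_of_nonneg_left hpu.le (sub_nonneg.2 h8)]
      have hA'c : (A'.card : ℝ) = (T.card : ℝ) := Nat.cast_inj.2 hA'card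
      rw [hA'c] at hFA'
      have h3 : min c u ≤ c := min_le_left _ _
      linarith
    · -- more than F.card large entries
      obtain ⟨T', hT'sub, hT'card⟩ := Finset.exists_subset_card_eq (Nat.succ_le_of_lt hmn)
      have h1 : ∑ x ∈ T', min (Q x) u ≤ ∑' x, min (Q x) u :=
        Summable.sum_le_tsum T' (fun i _ => le_min (hQ0 i) hu.le) hminS
      have h2 : ∑ x ∈ T', min (Q x) u = (T'.card : ℝ) * u := by
        rw [Finset.sum_congr rfl (fun x hx => min_eq_right ((hmemT x).1 (hT'sub hx))),
          Finset.sum_const, nsmul_eq_mul]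
      have h3 : min c u ≤ u := min_le_right _ _
      have h4 : (T'.card : ℝ) = (F.card : ℝ) + 1 := by exact_mod_cast congrArg Nat.cast hT'card
      rw [h4] at h2
      linarith


lemma rep_formula {α : ℝ} (hα0 : 0 < α) (hα1 : α < 1) {t : ℝ} (ht : 0 ≤ t) :
    ∫⁻ u in Set.Ioi (0:ℝ), ENNReal.ofReal (min t u * u ^ (α - 2)) =
      ENNReal.ofReal (t ^ α * (1 / α + 1 / (1 - α))) := by
  rcases eq_or_lt_of_le ht with h0 | htpos
  · -- t = 0
    rw [← h0]
    have h1 : ∫⁻ u in Set.Ioi (0:ℝ), ENNReal.ofReal (min 0 u * u ^ (α - 2))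
        = ∫⁻ _u in Set.Ioi (0:ℝ), 0 := by
      refine setLIntegral_congr_fun measurableSet_Ioi ?_
      intro u hu
      dsimp only
      rw [min_eq_left (le_of_lt hu), zero_mul, ENNReal.ofReal_zero]
    rw [h1, lintegral_zero, Real.zero_rpow (ne_of_gt hα0), zero_mul, ENNReal.ofReal_zero]
  · -- t > 0
    have hsplit : Set.Ioc (0:ℝ) t ∪ Set.Ioi t = Set.Ioi 0 := Set.Ioc_union_Ioi_eq_Ioi ht
    rw [← hsplit, lintegral_union measurableSet_Ioi (Set.Ioc_disjoint_Ioi le_rfl)]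
    -- first piece
    have hint1 : IntegrableOn (fun u : ℝ => u ^ (α - 1)) (Set.Ioc 0 t) volume := by
      have := (intervalIntegral.intervalIntegrable_rpow' (a := 0) (b := t)
        (r := α - 1) (by linarith)).1
      simpa [Set.uIoc_of_le ht] using this
    have h1 : ∫⁻ u in Set.Ioc (0:ℝ) t, ENNReal.ofReal (min t u * u ^ (α - 2))
        = ENNReal.ofReal (t ^ α / α) := by
      have hcong : ∫⁻ u in Set.Ioc (0:ℝ) t, ENNReal.ofReal (min t u * u ^ (α - 2))
          = ∫⁻ u in Set.Ioc (0:ℝ) t, ENNReal.ofReal (u ^ (α - 1)) := by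
        refine setLIntegral_congr_fun measurableSet_Ioc ?_
        intro u hu
        dsimp only
        rw [min_eq_right hu.2]
        congr 1
        rw [show (α:ℝ) - 1 = 1 + (α - 2) by ring, Real.rpow_add hu.1, Real.rpow_one]
      rw [hcong, ← ofReal_integral_eq_lintegral_ofReal hint1]
      · congr 1
        rw [← intervalIntegral.integral_of_le ht,
          integral_rpow (Or.inl (by linarith : (-1:ℝ) < α - 1))]
        have : α - 1 + 1 = α := by ring
        rw [this, Real.zero_rpow (ne_of_gt hα0)]
        ring
      · filter_upwards [ae_restrict_mem measurableSet_Ioc] with u hu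
        exact Real.rpow_nonneg hu.1.le _
    -- second piece
    have hint2 : IntegrableOn (fun u : ℝ => t * u ^ (α - 2)) (Set.Ioi t) volume :=
      (integrableOn_Ioi_rpow_of_lt (by linarith) htpos).const_mul t
    have h2 : ∫⁻ u in Set.Ioi t, ENNReal.ofReal (min t u * u ^ (α - 2))
        = ENNReal.ofReal (t ^ α / (1 - α)) := by
      have hcong : ∫⁻ u in Set.Ioi t, ENNReal.ofReal (min t u * u ^ (α - 2))
          = ∫⁻ u in Set.Ioi t, ENNReal.ofReal (t * u ^ (α - 2)) := by
        refine setLIntegral_congr_fun measurableSet_Ioi ?_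
        intro u hu
        dsimp only
        rw [min_eq_left (le_of_lt hu)]
      rw [hcong, ← ofReal_integral_eq_lintegral_ofReal hint2]
      · congr 1
        rw [MeasureTheory.integral_const_mul, integral_Ioi_rpow_of_lt (by linarith) htpos]
        have h3 : α - 2 + 1 = α - 1 := by ring
        have htt : t * t ^ (α - 1) = t ^ (α:ℝ) := by
          have h5 := (Real.rpow_add htpos 1 (α - 1)).symm
          rw [Real.rpow_one] at h5
          rw [h5]
          norm_num
        rw [h3, ← htt]
        have hne1 : α - 1 ≠ 0 := by linarith
        have hne2 : (1:ℝ) - α ≠ 0 := by linarith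
        field_simp
        ring
      · filter_upwards [ae_restrict_mem measurableSet_Ioi] with u hu
        have hu0 : (0:ℝ) < u := lt_trans htpos hu
        exact mul_nonneg ht (Real.rpow_nonneg hu0.le _)
    rw [h1, h2, ← ENNReal.ofReal_add
      (div_nonneg (Real.rpow_nonneg ht _) hα0.le)
      (div_nonneg (Real.rpow_nonneg ht _) (by linarith))]
    congr 1
    field_simp

lemma lower_bound {X : Type*} [Countable X] (P Q : X → ℝ) (F : Finset X) (p c α : ℝ)
    (hα0 : 0 < α) (hα1 : α < 1)
    (hQ0 : ∀ x, 0 ≤ Q x) (hQP : ∀ x, Q x ≤ P x) (hP0 : ∀ x, 0 ≤ P x)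
    (hSQ : Summable Q) (hSQα : Summable fun x => Q x ^ α)
    (hPp : ∀ x ∈ F, p ≤ P x) (hout : ∀ x, x ∉ F → Q x ≤ p)
    (hc0 : 0 ≤ c) (hcp : c ≤ p)
    (hmass : ∑ x ∈ F, P x + c ≤ ∑' x, Q x) :
    ∑ x ∈ F, P x ^ α + c ^ α ≤ ∑' x, Q x ^ α := by
  classical
  set κ : ℝ := 1 / α + 1 / (1 - α) with hκdef
  have hκ : 0 < κ := add_pos (one_div_pos.2 hα0) (one_div_pos.2 (by linarith))
  have meas : ∀ t : ℝ, Measurable fun u : ℝ => ENNReal.ofReal (min t u * u ^ (α - 2)) := by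
    intro t; fun_prop
  have hQα0 : ∀ x, 0 ≤ Q x ^ α := fun x => Real.rpow_nonneg (hQ0 x) α
  have hPα0 : ∀ x, 0 ≤ P x ^ α := fun x => Real.rpow_nonneg (hP0 x) α
  have hcα0 : 0 ≤ c ^ α := Real.rpow_nonneg hc0 α
  have key : ENNReal.ofReal ((∑ x ∈ F, P x ^ α + c ^ α) * κ)
      ≤ ENNReal.ofReal ((∑' x, Q x ^ α) * κ) := by
    calc ENNReal.ofReal ((∑ x ∈ F, P x ^ α + c ^ α) * κ)
        = ∑ x ∈ F, ENNReal.ofReal (P x ^ α * κ) + ENNReal.ofReal (c ^ α * κ) := by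
          rw [add_mul, Finset.sum_mul,
            ENNReal.ofReal_add (Finset.sum_nonneg fun x _ => mul_nonneg (hPα0 x) hκ.le)
              (mul_nonneg hcα0 hκ.le),
            ENNReal.ofReal_sum_of_nonneg (fun x _ => mul_nonneg (hPα0 x) hκ.le)]
      _ = ∑ x ∈ F, (∫⁻ u in Set.Ioi (0:ℝ), ENNReal.ofReal (min (P x) u * u ^ (α - 2)))
            + ∫⁻ u in Set.Ioi (0:ℝ), ENNReal.ofReal (min c u * u ^ (α - 2)) := by
          rw [rep_formula hα0 hα1 hc0]
          congr 1
          exact Finset.sum_congr rfl fun x _ => (rep_formula hα0 hα1 (hP0 x)).symm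
      _ = ∫⁻ u in Set.Ioi (0:ℝ),
            (∑ x ∈ F, ENNReal.ofReal (min (P x) u * u ^ (α - 2))
              + ENNReal.ofReal (min c u * u ^ (α - 2))) := by
          rw [lintegral_add_right _ (meas c), lintegral_finset_sum F (fun x _ => meas (P x))]
      _ ≤ ∫⁻ u in Set.Ioi (0:ℝ), ∑' x, ENNReal.ofReal (min (Q x) u * u ^ (α - 2)) := by
          refine lintegral_mono_ae ?_
          filter_upwards [ae_restrict_mem measurableSet_Ioi] with u hu
          have hu0 : (0:ℝ) < u := hu
          have hw : (0:ℝ) ≤ u ^ (α - 2) := Real.rpow_nonneg hu0.le _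
          have hminS : Summable fun x => min (Q x) u :=
            Summable.of_nonneg_of_le (fun x => le_min (hQ0 x) hu0.le)
              (fun x => min_le_left _ _) hSQ
          have hL : ∑ x ∈ F, ENNReal.ofReal (min (P x) u * u ^ (α - 2))
              + ENNReal.ofReal (min c u * u ^ (α - 2))
              = ENNReal.ofReal ((∑ x ∈ F, min (P x) u + min c u) * u ^ (α - 2)) := by
            rw [add_mul, Finset.sum_mul,
              ENNReal.ofReal_add (Finset.sum_nonneg fun x _ =>
                mul_nonneg (le_min (hP0 x) hu0.le) hw)
                (mul_nonneg (le_min hc0 hu0.le) hw),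
              ENNReal.ofReal_sum_of_nonneg (fun x _ =>
                mul_nonneg (le_min (hP0 x) hu0.le) hw)]
          have hR : ∑' x, ENNReal.ofReal (min (Q x) u * u ^ (α - 2))
              = ENNReal.ofReal ((∑' x, min (Q x) u) * u ^ (α - 2)) := by
            rw [← tsum_mul_right, ← ENNReal.ofReal_tsum_of_nonneg
              (fun x => mul_nonneg (le_min (hQ0 x) hu0.le) hw) (hminS.mul_right _)]
          rw [hL, hR]
          exact ENNReal.ofReal_le_ofReal (mul_le_mul_of_nonneg_right
            (layer_bound P Q F p c u hQ0 hQP hSQ hPp hout hc0 hcp hmass hu0) hw)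
      _ = ∑' x, ∫⁻ u in Set.Ioi (0:ℝ), ENNReal.ofReal (min (Q x) u * u ^ (α - 2)) :=
          lintegral_tsum fun x => (meas (Q x)).aemeasurable
      _ = ∑' x, ENNReal.ofReal (Q x ^ α * κ) :=
          tsum_congr fun x => rep_formula hα0 hα1 (hQ0 x)
      _ = ENNReal.ofReal ((∑' x, Q x ^ α) * κ) := by
          rw [← tsum_mul_right, ← ENNReal.ofReal_tsum_of_nonneg
            (fun x => mul_nonneg (hQα0 x) hκ.le) (hSQα.mul_right _)]
  have h2 : (∑ x ∈ F, P x ^ α + c ^ α) * κ ≤ (∑' x, Q x ^ α) * κ :=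
    (ENNReal.ofReal_le_ofReal_iff
      (mul_nonneg (tsum_nonneg hQα0) hκ.le)).1 key
  exact le_of_mul_le_mul_right h2 hκ

end KogaAux

/-- Koga's formula: the `ε`-smooth Rényi entropy of order `0 < α < 1` equals
`(1/(1−α)) log₂ (∑_{x∈𝒜} P(x)^α + (1 − ε − P(𝒜))^α)`, where `𝒜` collects
highest-probability elements with `P(𝒜) < 1−ε ≤ P(𝒜) + max_{x∉𝒜} P(x)`. -/
theorem koga_smooth_renyi_formula {X : Type*} [Countable X]
    (P : X → ℝ) (α ε : ℝ) (A : Set X)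
    (hα0 : 0 < α) (hα1 : α < 1) (hε0 : 0 ≤ ε) (hε1 : ε < 1)
    (hP : ∀ x, 0 ≤ P x) (hsum : HasSum P 1)
    (hsummα : Summable fun x => P x ^ α)
    (hAne : A ≠ Set.univ)
    (horder : ∀ x₁ ∈ A, ∀ x₂ ∉ A, P x₂ ≤ P x₁)
    (hlow : ∑' x : A, P x < 1 - ε)
    (hup : 1 - ε ≤ (∑' x : A, P x) + ⨆ x : ↥Aᶜ, P x) :
    (1 / (1 - α)) * Real.logb 2 (sInf (smoothRenyiVals α ε P)) =
      (1 / (1 - α)) * Real.logb 2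
        ((∑' x : A, P x ^ α) + (1 - ε - ∑' x : A, P x) ^ α) := by
  classical
  have hPsum : Summable P := hsum.summable
  have htot : ∑' x, P x = 1 := hsum.tsum_eq
  set PA := ∑' x : A, P x with hPA
  set c := 1 - ε - PA with hc
  have hc0 : 0 < c := by rw [hc]; linarith
  have hcompl : Nonempty ↥Aᶜ := (Set.nonempty_compl.2 hAne).to_subtype
  have hbdd : BddAbove (Set.range fun x : ↥Aᶜ => P x) := by
    refine ⟨1, ?_⟩
    rintro _ ⟨x, rfl⟩
    calc P ↑x ≤ ∑' y, P y := Summable.le_tsum hPsum _ (fun y _ => hP y)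
      _ = 1 := htot
  set p := ⨆ x : ↥Aᶜ, P x with hp
  have hcp : c ≤ p := by rw [hc]; linarith
  have hp0 : 0 < p := lt_of_lt_of_le hc0 hcp
  have hPge : ∀ x ∈ A, p ≤ P x := fun x hx => ciSup_le fun y => horder x hx y y.2
  have hPle : ∀ x, x ∉ A → P x ≤ p := fun x hx => le_ciSup hbdd (⟨x, hx⟩ : ↥Aᶜ)
  have hAfin : A.Finite := by
    have h2 : ∀ᶠ x in Filter.cofinite, P x < p :=
      hPsum.tendsto_cofinite_zero.eventually_lt_const hp0
    exact (Filter.eventually_cofinite.1 h2).subset fun x hx => not_lt.2 (hPge x hx)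
  set F : Finset X := hAfin.toFinset with hF
  have hFA : (↑F : Set X) = A := hAfin.coe_toFinset
  have hmemF : ∀ x, x ∈ F ↔ x ∈ A := fun x => by rw [← hFA]; exact Iff.rfl
  have hPAF : PA = ∑ x ∈ F, P x := by
    rw [hPA, ← hFA]; exact Finset.tsum_subtype' F P
  have hPAFα : (∑' x : A, P x ^ α) = ∑ x ∈ F, P x ^ α := by
    rw [← hFA]; exact Finset.tsum_subtype' F (fun y => P y ^ α)
  -- the supremum is attained
  obtain ⟨x₀, hx₀A, hx₀p⟩ : ∃ x₀, x₀ ∉ A ∧ P x₀ = p := by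
    have hhalf : (0:ℝ) < p / 2 := by linarith
    have hG : {x | p / 2 ≤ P x}.Finite := by
      have h2 : ∀ᶠ x in Filter.cofinite, P x < p / 2 :=
        hPsum.tendsto_cofinite_zero.eventually_lt_const hhalf
      exact (Filter.eventually_cofinite.1 h2).subset fun x hx => not_lt.2 hx
    have hGfin : {x | x ∉ A ∧ p / 2 ≤ P x}.Finite := hG.subset fun x hx => hx.2
    have hGne : {x | x ∉ A ∧ p / 2 ≤ P x}.Nonempty := by
      by_contra hemp
      rw [Set.not_nonempty_iff_eq_empty] at hemp
      have hlt : ∀ y : ↥Aᶜ, P ↑y ≤ p / 2 := by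
        intro y
        by_contra hy
        exact Set.eq_empty_iff_forall_notMem.1 hemp ↑y ⟨y.2, (not_le.1 hy).le⟩
      have : p ≤ p / 2 := ciSup_le hlt
      linarith
    obtain ⟨x₀, hx₀G, hmax⟩ := Finset.exists_max_image hGfin.toFinset P
      (by rwa [Set.Finite.toFinset_nonempty])
    rw [Set.Finite.mem_toFinset] at hx₀G
    refine ⟨x₀, hx₀G.1, le_antisymm (hPle x₀ hx₀G.1) (ciSup_le fun y => ?_)⟩
    rcases le_or_gt (p / 2) (P ↑y) with h | h
    · exact hmax ↑y (by rw [Set.Finite.mem_toFinset]; exact ⟨y.2, h⟩)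
    · linarith [hx₀G.2]
  -- the optimal sub-distribution
  set Qs : X → ℝ := fun x => if x ∈ A then P x else if x = x₀ then c else 0 with hQs
  have hQs1 : Qs = fun x =>
      A.indicator P x + (fun y => if y = x₀ then c else 0) x := by
    funext x
    by_cases hxA : x ∈ A
    · have hne : x ≠ x₀ := fun h => hx₀A (h ▸ hxA)
      simp [hQs, hxA, hne, Set.indicator_of_mem hxA]
    · by_cases hx0 : x = x₀
      · subst hx0; simp [hQs, hxA, Set.indicator_of_notMem hxA]
      · simp [hQs, hxA, hx0, Set.indicator_of_notMem hxA]
  have hs2 : Summable (fun y : X => if y = x₀ then c else 0) :=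
    summable_of_ne_finset_zero (s := {x₀}) (fun b hb => if_neg (by simpa using hb))
  have hQsSum : Summable Qs := by
    rw [hQs1]; exact (hPsum.indicator A).add hs2
  have hQsVal : ∑' x, Qs x = PA + c := by
    simp only [hQs1]
    rw [Summable.tsum_add (hPsum.indicator A) hs2, ← tsum_subtype A P, tsum_ite_eq]
  have hQsα1 : (fun x => Qs x ^ α) = fun x =>
      A.indicator (fun y => P y ^ α) x + (fun y => if y = x₀ then c ^ α else 0) x := by
    funext x
    by_cases hxA : x ∈ A
    · have hne : x ≠ x₀ := fun h => hx₀A (h ▸ hxA)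
      simp [hQs, hxA, hne, Set.indicator_of_mem hxA]
    · by_cases hx0 : x = x₀
      · subst hx0; simp [hQs, hxA, Set.indicator_of_notMem hxA]
      · simp [hQs, hxA, hx0, Set.indicator_of_notMem hxA,
          Real.zero_rpow (ne_of_gt hα0)]
  have hs2α : Summable (fun y : X => if y = x₀ then c ^ α else 0) :=
    summable_of_ne_finset_zero (s := {x₀}) (fun b hb => if_neg (by simpa using hb))
  have hQsαSum : Summable (fun x => Qs x ^ α) := by
    rw [hQsα1]; exact (hsummα.indicator A).add hs2α
  have hQsαVal : ∑' x, Qs x ^ α = (∑' x : A, P x ^ α) + c ^ α := by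
    simp only [hQsα1]
    rw [Summable.tsum_add (hsummα.indicator A) hs2α,
      ← tsum_subtype A (fun y => P y ^ α), tsum_ite_eq]
  -- membership
  have hmem : (∑' x : A, P x ^ α) + c ^ α ∈ smoothRenyiVals α ε P := by
    refine ⟨Qs, fun x => ⟨?_, ?_⟩, ?_, hQsαSum, hQsαVal.symm⟩
    · by_cases hxA : x ∈ A
      · simpa [hQs, hxA] using hP x
      · by_cases hx0 : x = x₀
        · subst hx0; simpa [hQs, hxA] using hc0.le
        · simp [hQs, hxA, hx0]
    · by_cases hxA : x ∈ A
      · simp [hQs, hxA]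
      · by_cases hx0 : x = x₀
        · subst hx0
          simpa [hQs, hxA] using hcp.trans hx₀p.ge
        · simpa [hQs, hxA, hx0] using hP x
    · rw [hQsVal, hc]; linarith
  -- lower bound
  have hlb : ∀ s ∈ smoothRenyiVals α ε P, (∑' x : A, P x ^ α) + c ^ α ≤ s := by
    rintro s ⟨Q, hQ, hQmass, hQsummα, rfl⟩
    have hSQ : Summable Q :=
      Summable.of_nonneg_of_le (fun x => (hQ x).1) (fun x => (hQ x).2) hPsum
    have := lower_bound P Q F p c α hα0 hα1 (fun x => (hQ x).1) (fun x => (hQ x).2)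
      hP hSQ hQsummα (fun x hx => hPge x ((hmemF x).1 hx))
      (fun x hx => le_trans (hQ x).2 (hPle x (fun h => hx ((hmemF x).2 h))))
      hc0.le hcp (by rw [← hPAF, hc]; linarith)
    rw [hPAFα]
    exact this
  have hsInf : sInf (smoothRenyiVals α ε P) = (∑' x : A, P x ^ α) + c ^ α :=
    le_antisymm (csInf_le ⟨_, fun s hs => hlb s hs⟩ hmem) (le_csInf ⟨_, hmem⟩ hlb)
  rw [hsInf]
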